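/- Let γ(x) = (1/2)log₂(1+x). For the two-user Gaussian multiple access channel with powers P₁, P₂ > 0 and noise N > 0, the four regions D^{{1,2}}, D^{{1}}, D^{{2}}, D^{∅} defined by: D^{{1,2}} = {(R₁,R₂) : R₁ ≤ γ(P₁/N), R₂ ≤ γ(P₂/N), R₁+R₂ ≤ γ((P₁+P₂)/N)}; D^{{1}} = {R₁ ≤ γ(P₁/(P₂+N)), R₂ > γ(P₂/N)}; D^{{2}} = {R₂ ≤ γ(P₂/(P₁+N)), R₁ > γ(P₁/N)}; D^{∅} = {R₁ > γ(P₁/(P₂+N)), R₂ > γ(P₂/(P₁+N)), R₁+R₂ > γ((P₁+P₂)/N)} are pairwise disjoint and their union is ℝ₊². -/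

import Mathlib

/-- `γ(x) = (1/2) log₂(1+x)`. -/
noncomputable def gammaFn (x : ℝ) : ℝ := Real.logb 2 (1 + x) / 2

lemma gammaFn_le {x y : ℝ} (hx : 0 ≤ x) (h : x ≤ y) : gammaFn x ≤ gammaFn y := by
  unfold gammaFn
  have : Real.logb 2 (1 + x) ≤ Real.logb 2 (1 + y) :=
    Real.logb_le_logb_of_le (by norm_num) (by linarith) (by linarith)
  linarith

lemma gammaFn_nonneg {x : ℝ} (hx : 0 ≤ x) : 0 ≤ gammaFn x := by
  unfold gammaFn
  have : 0 ≤ Real.logb 2 (1 + x) := Real.logb_nonneg (by norm_num) (by linarith)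
  linarith

lemma gammaFn_add (a b N : ℝ) (ha : 0 < a) (hb : 0 < b) (hN : 0 < N) :
    gammaFn (a / (b + N)) + gammaFn (b / N) = gammaFn ((a + b) / N) := by
  unfold gammaFn
  have hbN : 0 < b + N := by linarith
  have e1 : 1 + a / (b + N) = (a + b + N) / (b + N) := by field_simp; ring
  have e2 : 1 + b / N = (b + N) / N := by field_simp; ring
  have e3 : 1 + (a + b) / N = (a + b + N) / N := by field_simp; ring
  rw [e1, e2, e3, ← add_div, ← Real.logb_mul
    (by positivity) (by positivity)]
  congr 2
  field_simp

/-- Decision regions for the maximum decodable subset of a two-user additive Gaussian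
channel: the four regions are pairwise disjoint and cover the nonnegative quadrant. -/
theorem two_user_decision_regions_partition
    (P₁ P₂ N : ℝ) (hP₁ : 0 < P₁) (hP₂ : 0 < P₂) (hN : 0 < N) :
    let D12 : Set (ℝ × ℝ) := {R | R.1 ≤ gammaFn (P₁ / N) ∧ R.2 ≤ gammaFn (P₂ / N) ∧
      R.1 + R.2 ≤ gammaFn ((P₁ + P₂) / N)}
    let D1 : Set (ℝ × ℝ) := {R | R.1 ≤ gammaFn (P₁ / (P₂ + N)) ∧ gammaFn (P₂ / N) < R.2}
    let D2 : Set (ℝ × ℝ) := {R | R.2 ≤ gammaFn (P₂ / (P₁ + N)) ∧ gammaFn (P₁ / N) < R.1}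
    let D0 : Set (ℝ × ℝ) := {R | gammaFn (P₁ / (P₂ + N)) < R.1 ∧
      gammaFn (P₂ / (P₁ + N)) < R.2 ∧ gammaFn ((P₁ + P₂) / N) < R.1 + R.2}
    let Q : Set (ℝ × ℝ) := {R | 0 ≤ R.1 ∧ 0 ≤ R.2}
    (D12 ∩ D1 = ∅) ∧ (D12 ∩ D2 = ∅) ∧ (D12 ∩ D0 = ∅) ∧
    (D1 ∩ D2 = ∅) ∧ (D1 ∩ D0 = ∅) ∧ (D2 ∩ D0 = ∅) ∧
    ((D12 ∪ D1 ∪ D2 ∪ D0) ∩ Q = Q) := by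
  intro D12 D1 D2 D0 Q
  have h1 : gammaFn (P₁ / (P₂ + N)) + gammaFn (P₂ / N) = gammaFn ((P₁ + P₂) / N) :=
    gammaFn_add P₁ P₂ N hP₁ hP₂ hN
  have h2 : gammaFn (P₂ / (P₁ + N)) + gammaFn (P₁ / N) = gammaFn ((P₁ + P₂) / N) := by
    rw [gammaFn_add P₂ P₁ N hP₂ hP₁ hN, add_comm P₂ P₁]
  have hle1 : gammaFn (P₁ / (P₂ + N)) ≤ gammaFn (P₁ / N) := by
    apply gammaFn_le (by positivity)
    apply div_le_div_of_nonneg_left hP₁.le hN (by linarith)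
  have hle2 : gammaFn (P₂ / (P₁ + N)) ≤ gammaFn (P₂ / N) := by
    apply gammaFn_le (by positivity)
    apply div_le_div_of_nonneg_left hP₂.le hN (by linarith)
  have hn1 : 0 ≤ gammaFn (P₁ / (P₂ + N)) := gammaFn_nonneg (by positivity)
  have hn2 : 0 ≤ gammaFn (P₂ / (P₁ + N)) := gammaFn_nonneg (by positivity)
  refine ⟨?_, ?_, ?_, ?_, ?_, ?_, ?_⟩
  · ext R; simp only [D12, D1, Set.mem_inter_iff, Set.mem_setOf_eq, Set.mem_empty_iff_false,
      iff_false]; rintro ⟨⟨_, h, _⟩, _, h'⟩; linarith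
  · ext R; simp only [D12, D2, Set.mem_inter_iff, Set.mem_setOf_eq, Set.mem_empty_iff_false,
      iff_false]; rintro ⟨⟨h, _, _⟩, _, h'⟩; linarith
  · ext R; simp only [D12, D0, Set.mem_inter_iff, Set.mem_setOf_eq, Set.mem_empty_iff_false,
      iff_false]; rintro ⟨⟨_, _, h⟩, _, _, h'⟩; linarith
  · ext R; simp only [D1, D2, Set.mem_inter_iff, Set.mem_setOf_eq, Set.mem_empty_iff_false,
      iff_false]; rintro ⟨⟨h, _⟩, _, h'⟩; linarith
  · ext R; simp only [D1, D0, Set.mem_inter_iff, Set.mem_setOf_eq, Set.mem_empty_iff_false,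
      iff_false]; rintro ⟨⟨h, _⟩, h', _⟩; linarith
  · ext R; simp only [D2, D0, Set.mem_inter_iff, Set.mem_setOf_eq, Set.mem_empty_iff_false,
      iff_false]; rintro ⟨⟨h, _⟩, _, h', _⟩; linarith
  · ext R
    simp only [D12, D1, D2, D0, Q, Set.mem_inter_iff, Set.mem_union, Set.mem_setOf_eq]
    constructor
    · rintro ⟨_, h⟩; exact h
    · rintro ⟨hR1, hR2⟩
      refine ⟨?_, hR1, hR2⟩
      by_cases hA : R.1 ≤ gammaFn (P₁ / (P₂ + N))
      · by_cases hB : R.2 ≤ gammaFn (P₂ / N)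
        · exact Or.inl (Or.inl (Or.inl ⟨by linarith, hB, by linarith⟩))
        · exact Or.inl (Or.inl (Or.inr ⟨hA, by linarith⟩))
      · push_neg at hA
        by_cases hB : R.2 ≤ gammaFn (P₂ / (P₁ + N))
        · by_cases hC : R.1 ≤ gammaFn (P₁ / N)
          · exact Or.inl (Or.inl (Or.inl ⟨hC, by linarith, by linarith⟩))
          · exact Or.inl (Or.inr ⟨hB, by linarith⟩)
        · push_neg at hB
          by_cases hD : R.1 + R.2 ≤ gammaFn ((P₁ + P₂) / N)
          · exact Or.inl (Or.inl (Or.inl ⟨by linarith, by linarith, hD⟩))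
          · exact Or.inr ⟨hA, hB, by linarith⟩
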